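/- The set S_{(s,0)} is perfect: it is closed and has no isolated points. -/

import Mathlib

open Finset

/-- The term of the series: `c n / s ^ (c 1 + ... + c (n+1))` (0-indexed). -/
noncomputable def sTerm (s : ℕ) (c : ℕ → ℕ) (n : ℕ) : ℝ :=
  (c n : ℝ) / (s : ℝ) ^ (∑ k ∈ Finset.range (n + 1), c k)

/-- `x = Σ_{k=1}^∞ c_k / s^{c_1+⋯+c_k}`. -/
noncomputable def sVal (s : ℕ) (c : ℕ → ℕ) : ℝ := ∑' n : ℕ, sTerm s c n

/-- The sequence `(c_k)` has all terms in `{1, ..., s-1}`. -/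
def sValid (s : ℕ) (c : ℕ → ℕ) : Prop := ∀ k, 1 ≤ c k ∧ c k ≤ s - 1

/-- The set `S_{(s,0)}`. -/
def Sset (s : ℕ) : Set ℝ := { x | ∃ c : ℕ → ℕ, sValid s c ∧ x = sVal s c }

/-- The cylinder `Δ'_{c_1 ... c_n}` of rank `n` with base the first `n` terms of `c`. -/
def cyl (s n : ℕ) (c : ℕ → ℕ) : Set ℝ :=
  { x | ∃ c' : ℕ → ℕ, sValid s c' ∧ (∀ k < n, c' k = c k) ∧ x = sVal s c' }

/-- The cylinder `Δ'_{c_1 ... c_n p}`: prefix of length `n` from `c`, next digit `p`. -/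
def cylExt (s n : ℕ) (c : ℕ → ℕ) (p : ℕ) : Set ℝ :=
  { x | ∃ c' : ℕ → ℕ, sValid s c' ∧ (∀ k < n, c' k = c k) ∧ c' n = p ∧ x = sVal s c' }

/-- `g_n = Σ_{k=1}^n c_k / s^{c_1+⋯+c_k}`. -/
noncomputable def gPart (s n : ℕ) (c : ℕ → ℕ) : ℝ := ∑ k ∈ Finset.range n, sTerm s c k

/-! Auxiliary lemmas -/

lemma sTerm_nonneg (s : ℕ) (c : ℕ → ℕ) (n : ℕ) : 0 ≤ sTerm s c n := by
  unfold sTerm; positivity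

lemma sum_ge {s : ℕ} {c : ℕ → ℕ} (hc : sValid s c) (n : ℕ) :
    n + 1 ≤ ∑ k ∈ Finset.range (n + 1), c k := by
  calc n + 1 = ∑ _k ∈ Finset.range (n + 1), 1 := by simp
  _ ≤ _ := Finset.sum_le_sum fun k _ => (hc k).1

lemma sTerm_le {s : ℕ} {c : ℕ → ℕ} (hs : 2 < s) (hc : sValid s c) (n : ℕ) :
    sTerm s c n ≤ ((1:ℝ)/s) ^ n := by
  have hs0 : (0:ℝ) < s := by exact_mod_cast (by omega : 0 < s)
  have hs1 : (1:ℝ) ≤ s := by exact_mod_cast by omega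
  have h1 : sTerm s c n ≤ (s:ℝ) / (s:ℝ) ^ (n + 1) := by
    unfold sTerm
    apply div_le_div₀ hs0.le ?_ (by positivity) ?_
    · have h := (hc n).2
      exact_mod_cast (by omega : c n ≤ s)
    · exact pow_le_pow_right₀ hs1 (sum_ge hc n)
  have h2 : (s:ℝ) / (s:ℝ) ^ (n + 1) = ((1:ℝ)/s) ^ n := by
    rw [one_div_pow, pow_succ]
    field_simp
  linarith
lemma r_lt_one {s : ℕ} (hs : 2 < s) : (1:ℝ)/s < 1 := by
  rw [div_lt_one (by exact_mod_cast (by omega : 0 < s))]; exact_mod_cast by omega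

lemma summable_sTerm {s : ℕ} {c : ℕ → ℕ} (hs : 2 < s) (hc : sValid s c) :
    Summable (sTerm s c) :=
  Summable.of_nonneg_of_le (sTerm_nonneg s c) (sTerm_le hs hc)
    (summable_geometric_of_lt_one (by positivity) (r_lt_one hs))

noncomputable def sTail (s : ℕ) (c : ℕ → ℕ) (n : ℕ) : ℝ := ∑' m, sTerm s c (m + n)

lemma summable_sTail {s : ℕ} {c : ℕ → ℕ} (hs : 2 < s) (hc : sValid s c) (n : ℕ) :
    Summable (fun m => sTerm s c (m + n)) :=
  (summable_nat_add_iff n).mpr (summable_sTerm hs hc)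

lemma sVal_eq {s : ℕ} {c : ℕ → ℕ} (hs : 2 < s) (hc : sValid s c) (n : ℕ) :
    sVal s c = gPart s n c + sTail s c n :=
  (Summable.sum_add_tsum_nat_add n (summable_sTerm hs hc)).symm

lemma sTail_nonneg (s : ℕ) (c : ℕ → ℕ) (n : ℕ) : 0 ≤ sTail s c n :=
  tsum_nonneg fun m => sTerm_nonneg s c (m + n)

lemma sTail_le {s : ℕ} {c : ℕ → ℕ} (hs : 2 < s) (hc : sValid s c) (n : ℕ) :
    sTail s c n ≤ ((1:ℝ)/s) ^ n * (1 - (1:ℝ)/s)⁻¹ := by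
  have hr0 : (0:ℝ) ≤ 1/s := by positivity
  have hr1 := r_lt_one hs
  have hgeom : Summable (fun m : ℕ => ((1:ℝ)/s) ^ n * ((1:ℝ)/s) ^ m) :=
    (summable_geometric_of_lt_one hr0 hr1).mul_left _
  have h := Summable.tsum_le_tsum (f := fun m => sTerm s c (m + n))
    (g := fun m : ℕ => ((1:ℝ)/s) ^ n * ((1:ℝ)/s) ^ m)
    (fun m => by
      have := sTerm_le hs hc (m + n)
      rw [pow_add] at this
      linarith [this])
    (summable_sTail hs hc n) hgeom
  rw [tsum_mul_left, tsum_geometric_of_lt_one hr0 hr1] at h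
  exact h

lemma sTerm_pos {s : ℕ} {c : ℕ → ℕ} (hs : 2 < s) (hc : sValid s c) (n : ℕ) :
    0 < sTerm s c n := by
  unfold sTerm
  apply div_pos
  · exact_mod_cast (hc n).1
  · positivity

lemma sTail_split {s : ℕ} {c : ℕ → ℕ} (hs : 2 < s) (hc : sValid s c) (n : ℕ) :
    sTail s c n = sTerm s c n + ∑' m, sTerm s c (m + (n + 1)) := by
  rw [sTail, Summable.tsum_eq_zero_add (summable_sTail hs hc n)]
  congr 1
  · simp
  · exact tsum_congr fun b => by congr 1; omega

lemma sTail_lower {s : ℕ} {c : ℕ → ℕ} (hs : 2 < s) (hc : sValid s c) (n : ℕ) :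
    (c n : ℝ) / (s : ℝ) ^ (∑ k ∈ Finset.range (n + 1), c k) < sTail s c n := by
  rw [sTail_split hs hc n]
  have hpos : 0 < ∑' m, sTerm s c (m + (n + 1)) :=
    Summable.tsum_pos (summable_sTail hs hc (n + 1)) (fun m => sTerm_nonneg s c _) 0
      (sTerm_pos hs hc (0 + (n + 1)))
  have : sTerm s c n = (c n : ℝ) / (s : ℝ) ^ (∑ k ∈ Finset.range (n + 1), c k) := rfl
  linarith

lemma sTail_upper {s : ℕ} {c : ℕ → ℕ} (hs : 2 < s) (hc : sValid s c) (n : ℕ) :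
    sTail s c n ≤ ((c n : ℝ) + 1) / (s : ℝ) ^ (∑ k ∈ Finset.range (n + 1), c k) := by
  have hs0 : (0:ℝ) < s := by exact_mod_cast (by omega : 0 < s)
  have hs1 : (1:ℝ) ≤ s := by exact_mod_cast (by omega : 1 ≤ s)
  set σ := ∑ k ∈ Finset.range (n + 1), c k with hσ
  rw [sTail_split hs hc n]
  have hbound : ∀ m : ℕ, sTerm s c (m + (n + 1)) ≤
      (((s:ℝ) - 1) / (s:ℝ) ^ (σ + 1)) * ((1:ℝ)/s) ^ m := by
    intro m
    have hidx : m + (n + 1) + 1 = (n + 1) + (m + 1) := by omega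
    have hsum : σ + (m + 1) ≤ ∑ k ∈ Finset.range (m + (n + 1) + 1), c k := by
      rw [hidx, Finset.sum_range_add]
      have : m + 1 ≤ ∑ k ∈ Finset.range (m + 1), c (n + 1 + k) := by
        calc m + 1 = ∑ _k ∈ Finset.range (m + 1), 1 := by simp
        _ ≤ _ := Finset.sum_le_sum fun k _ => (hc _).1
      omega
    have h1 : sTerm s c (m + (n + 1)) ≤ ((s:ℝ) - 1) / (s:ℝ) ^ (σ + (m + 1)) := by
      unfold sTerm
      apply div_le_div₀ (by linarith) ?_ (by positivity) ?_
      · have h := (hc (m + (n + 1))).2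
        have : (c (m + (n + 1)) : ℝ) ≤ ((s - 1 : ℕ) : ℝ) := by exact_mod_cast h
        rwa [Nat.cast_sub (by omega), Nat.cast_one] at this
      · exact pow_le_pow_right₀ hs1 hsum
    have h2 : ((s:ℝ) - 1) / (s:ℝ) ^ (σ + (m + 1)) =
        (((s:ℝ) - 1) / (s:ℝ) ^ (σ + 1)) * ((1:ℝ)/s) ^ m := by
      rw [one_div_pow]
      rw [show σ + (m + 1) = (σ + 1) + m by omega, pow_add]
      field_simp
    linarith [h1, h2.le]
  have hgeom : Summable (fun m : ℕ => (((s:ℝ) - 1) / (s:ℝ) ^ (σ + 1)) * ((1:ℝ)/s) ^ m) :=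
    (summable_geometric_of_lt_one (by positivity) (r_lt_one hs)).mul_left _
  have h := Summable.tsum_le_tsum hbound (summable_sTail hs hc (n + 1)) hgeom
  rw [tsum_mul_left, tsum_geometric_of_lt_one (by positivity) (r_lt_one hs)] at h
  have hval : (((s:ℝ) - 1) / (s:ℝ) ^ (σ + 1)) * (1 - (1:ℝ)/s)⁻¹ = 1 / (s:ℝ) ^ σ := by
    have h3 : (3:ℝ) ≤ (s:ℝ) := by exact_mod_cast (by omega : 3 ≤ s)
    have ha : (s:ℝ) - 1 ≠ 0 := by intro h; linarith
    have e1 : (1:ℝ) - 1/s = ((s:ℝ) - 1)/s := by field_simp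
    rw [e1, inv_div, pow_succ]
    field_simp
  rw [hval] at h
  have hterm : sTerm s c n = (c n : ℝ) / (s:ℝ) ^ σ := rfl
  rw [hterm, add_div]
  linarith

lemma three_pow_ge (d : ℕ) : 2 * d + 1 ≤ 3 ^ d := by
  induction d with
  | zero => simp
  | succ d ih =>
    have : 3 ^ (d + 1) = 3 * 3 ^ d := by ring
    omega

lemma key_nat {s a b : ℕ} (hs : 2 < s) (ha : 1 ≤ a) (hab : a < b) :
    (b + 1) * s ^ a ≤ a * s ^ b := by
  obtain ⟨d, rfl⟩ : ∃ d, b = a + (d + 1) := ⟨b - a - 1, by omega⟩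
  have h3 : 2 * (d + 1) + 1 ≤ 3 ^ (d + 1) := three_pow_ge (d + 1)
  have h4 : 3 ^ (d + 1) ≤ s ^ (d + 1) := Nat.pow_le_pow_left (by omega) _
  have h5 : a + d + 2 ≤ a * s ^ (d + 1) := by nlinarith
  calc (a + (d + 1) + 1) * s ^ a = (a + d + 2) * s ^ a := by ring_nf
  _ ≤ (a * s ^ (d + 1)) * s ^ a := Nat.mul_le_mul_right _ h5
  _ = a * s ^ (a + (d + 1)) := by rw [pow_add]; ring

lemma prefix_gPart_eq {s n : ℕ} {c c' : ℕ → ℕ} (hpre : ∀ k < n, c' k = c k) :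
    gPart s n c' = gPart s n c := by
  unfold gPart
  apply Finset.sum_congr rfl
  intro k hk
  rw [Finset.mem_range] at hk
  unfold sTerm
  rw [hpre k hk]
  congr 2
  apply Finset.sum_congr rfl
  intro j hj
  rw [Finset.mem_range] at hj
  exact hpre j (by omega)

lemma sVal_lt {s n : ℕ} {c c' : ℕ → ℕ} (hs : 2 < s) (hc : sValid s c) (hc' : sValid s c')
    (hpre : ∀ k < n, c' k = c k) (hlt : c n < c' n) : sVal s c' < sVal s c := by
  have hs0 : (0:ℝ) < s := by exact_mod_cast (by omega : 0 < s)
  rw [sVal_eq hs hc n, sVal_eq hs hc' n, prefix_gPart_eq hpre]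
  have hS : ∑ k ∈ Finset.range n, c' k = ∑ k ∈ Finset.range n, c k :=
    Finset.sum_congr rfl fun k hk => hpre k (Finset.mem_range.mp hk)
  have hσ : ∑ k ∈ Finset.range (n + 1), c k = (∑ k ∈ Finset.range n, c k) + c n :=
    Finset.sum_range_succ c n
  have hσ' : ∑ k ∈ Finset.range (n + 1), c' k = (∑ k ∈ Finset.range n, c k) + c' n := by
    rw [Finset.sum_range_succ, hS]
  set S := ∑ k ∈ Finset.range n, c k
  have hkey : (c' n + 1) * s ^ (S + c n) ≤ c n * s ^ (S + c' n) := by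
    rw [pow_add, pow_add]
    calc (c' n + 1) * (s ^ S * s ^ (c n)) = ((c' n + 1) * s ^ (c n)) * s ^ S := by ring
    _ ≤ (c n * s ^ (c' n)) * s ^ S := Nat.mul_le_mul_right _ (key_nat hs (hc n).1 hlt)
    _ = c n * (s ^ S * s ^ (c' n)) := by ring
  have hkeyR : ((c' n : ℝ) + 1) / (s:ℝ) ^ (S + c' n) ≤ (c n : ℝ) / (s:ℝ) ^ (S + c n) := by
    rw [div_le_div_iff₀ (by positivity) (by positivity)]
    exact_mod_cast hkey
  have h1 := sTail_upper hs hc' n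
  have h2 := sTail_lower hs hc n
  rw [hσ'] at h1
  rw [hσ] at h2
  linarith

theorem stmt13 (s : ℕ) (hs : 2 < s) : Perfect (Sset s) := by
  have hs0 : (0:ℝ) < s := by exact_mod_cast (by omega : 0 < s)
  have hr0 : (0:ℝ) ≤ 1/s := by positivity
  have hr1 := r_lt_one hs
  constructor
  · -- closed
    set I : Set ℕ := Set.Icc 1 (s - 1) with hI
    set F : (ℕ → I) → ℝ := fun f => sVal s (fun n => (f n : ℕ)) with hF
    have hvalid : ∀ f : ℕ → I, sValid s (fun n => (f n : ℕ)) := fun f k => Set.mem_Icc.mp (f k).2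
    have hcont : Continuous F := by
      rw [hF]
      unfold sVal
      apply continuous_tsum (u := fun n => ((1:ℝ)/s) ^ n)
      · intro i
        unfold sTerm
        apply Continuous.div
        · exact Continuous.comp (g := fun k : I => ((k : ℕ) : ℝ))
            continuous_of_discreteTopology (continuous_apply i)
        · have he : (fun x : ℕ → I => (s:ℝ) ^ (∑ k ∈ Finset.range (i + 1), ((x k : ℕ)))) =
              fun x => ∏ k ∈ Finset.range (i + 1), (s:ℝ) ^ ((x k : ℕ)) := by
            funext x; rw [Finset.prod_pow_eq_pow_sum]
          rw [he]
          exact continuous_finset_prod _ fun k _ =>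
            Continuous.comp (g := fun j : I => (s:ℝ) ^ (j : ℕ))
              continuous_of_discreteTopology (continuous_apply k)
        · intro x; positivity
      · exact summable_geometric_of_lt_one hr0 hr1
      · intro n x
        rw [Real.norm_of_nonneg (sTerm_nonneg _ _ _)]
        exact sTerm_le hs (hvalid x) n
    have hrange : Sset s = Set.range F := by
      ext x
      constructor
      · rintro ⟨c, hc, rfl⟩
        exact ⟨fun n => ⟨c n, Set.mem_Icc.mpr (hc n)⟩, rfl⟩
      · rintro ⟨f, rfl⟩
        exact ⟨_, hvalid f, rfl⟩
    rw [hrange]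
    exact (isCompact_range hcont).isClosed
  · -- accumulation
    rintro x ⟨c, hc, rfl⟩
    rw [accPt_iff_nhds]
    intro U hU
    obtain ⟨ε, hε, hball⟩ := Metric.mem_nhds_iff.mp hU
    have h1r : (0:ℝ) < 1 - 1/s := by linarith
    obtain ⟨n, hn⟩ := exists_pow_lt_of_lt_one (x := ε * (1 - 1/s)) (by positivity) hr1
    set d : ℕ := if c n = 1 then 2 else 1 with hd
    have hdne : d ≠ c n := by
      rcases eq_or_ne (c n) 1 with h | h <;> simp [hd, h]
      omega
    set c' : ℕ → ℕ := Function.update c n d with hc'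
    have hd1 : 1 ≤ d ∧ d ≤ s - 1 := by
      rcases eq_or_ne (c n) 1 with h | h
      · rw [hd]; simp only [h, if_true]; omega
      · rw [hd]; simp only [h, if_false]; omega
    have hvalid' : sValid s c' := by
      intro k
      rcases eq_or_ne k n with rfl | h
      · rw [hc', Function.update_self]; exact hd1
      · rw [hc', Function.update_of_ne h]
        exact hc k
    have hpre : ∀ k < n, c' k = c k := fun k hk =>
      Function.update_of_ne (by omega) _ _
    have hcn : c' n = d := Function.update_self _ _ _
    have hne : sVal s c' ≠ sVal s c := by
      rcases lt_or_gt_of_ne hdne with h | h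
      · have := sVal_lt (c := c') (c' := c) hs hvalid' hc
          (n := n) (fun k hk => (hpre k hk).symm) (by rw [hcn]; omega)
        exact ne_of_gt this
      · have := sVal_lt (c := c) (c' := c') hs hc hvalid'
          (n := n) hpre (by rw [hcn]; omega)
        exact ne_of_lt this
    have hclose : |sVal s c' - sVal s c| < ε := by
      rw [sVal_eq hs hc n, sVal_eq hs hvalid' n, prefix_gPart_eq hpre]
      have e1 := sTail_nonneg s c n
      have e2 := sTail_nonneg s c' n
      have e3 := sTail_le hs hc n
      have e4 := sTail_le hs hvalid' n
      have hb : ((1:ℝ)/s) ^ n * (1 - (1:ℝ)/s)⁻¹ < ε := by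
        rw [← div_eq_mul_inv, div_lt_iff₀ h1r]
        exact hn
      rw [abs_lt]
      constructor <;> linarith
    refine ⟨sVal s c', ⟨hball ?_, ⟨c', hvalid', rfl⟩⟩, hne⟩
    rw [Metric.mem_ball, Real.dist_eq]
    exact hclose
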